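/- Suppose P(z) = Σ_{k=−r}^{r} p(k) z^{−k} is a Laurent polynomial with real coefficients satisfying P(z) ≥ 0 for all z on the unit circle 𝕋. Then there exists a polynomial Q(z) = Σ_{k=0}^{r} q(k) z^{−k} such that P(z) = |Q(z)|² = Q(z) Q(z⁻¹)* for all z ∈ 𝕋 (Fejér–Riesz). -/

import Mathlib

open Complex

namespace FejerRieszAux

open Polynomial ComplexConjugate

lemma circ_mem (n : ℕ) : ‖Complex.exp (((n:ℝ)+1)⁻¹ * I)‖ = 1 := by
  simpa using Complex.norm_exp_ofReal_mul_I (((n:ℝ)+1)⁻¹)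

lemma circ_inj : Function.Injective (fun n : ℕ => Complex.exp (((n:ℝ)+1)⁻¹ * I)) := by
  intro a b h
  simp only [Complex.exp_eq_exp_iff_exists_int] at h
  obtain ⟨m, hm⟩ := h
  have key : ((((a:ℝ)+1)⁻¹ - ((b:ℝ)+1)⁻¹ - m * (2*Real.pi) : ℝ) : ℂ) * I = 0 := by
    push_cast at hm ⊢
    linear_combination hm
  rcases mul_eq_zero.mp key with h0 | h0
  swap
  · exact absurd h0 I_ne_zero
  rw [Complex.ofReal_eq_zero] at h0
  have ha : (0:ℝ) < ((a:ℝ)+1)⁻¹ := by positivity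
  have hb : (0:ℝ) < ((b:ℝ)+1)⁻¹ := by positivity
  have ha1 : ((a:ℝ)+1)⁻¹ ≤ 1 := by
    rw [inv_le_one_iff₀]; right; linarith [Nat.cast_nonneg (α := ℝ) a]
  have hb1 : ((b:ℝ)+1)⁻¹ ≤ 1 := by
    rw [inv_le_one_iff₀]; right; linarith [Nat.cast_nonneg (α := ℝ) b]
  have hpi := Real.pi_gt_three
  have hm0 : m = 0 := by
    rcases lt_trichotomy m 0 with h|h|h
    · have : (m:ℝ) ≤ -1 := by exact_mod_cast Int.le_sub_one_iff.mpr h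
      nlinarith
    · exact h
    · have : (1:ℝ) ≤ m := by exact_mod_cast h
      nlinarith
  rw [hm0] at h0
  push_cast at h0
  have h1 : ((a:ℝ)+1) ≠ 0 := by positivity
  have h2 : ((b:ℝ)+1) ≠ 0 := by positivity
  have heq : ((a:ℝ)+1)⁻¹ = ((b:ℝ)+1)⁻¹ := by linarith
  have := inv_injective heq
  exact_mod_cast Nat.cast_injective (by linarith : ((a:ℝ)) = b)

lemma poly_eq_of_circle (D : Polynomial ℂ) (h : ∀ z : ℂ, ‖z‖ = 1 → D.eval z = 0) : D = 0 := by
  apply Polynomial.eq_zero_of_infinite_isRoot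
  apply Set.Infinite.mono (s := Set.range (fun n : ℕ => Complex.exp (((n:ℝ)+1)⁻¹ * I)))
  · rintro z ⟨n, rfl⟩
    exact h _ (circ_mem n)
  · exact Set.infinite_range_of_injective circ_inj

lemma poly_eq_of_nonzero (D : Polynomial ℂ) (h : ∀ z : ℂ, z ≠ 0 → D.eval z = 0) : D = 0 := by
  apply Polynomial.eq_zero_of_infinite_isRoot
  apply Set.Infinite.mono (s := {z : ℂ | z ≠ 0})
  · intro z hz; exact h z hz
  · exact Set.Finite.infinite_compl (Set.finite_singleton (0:ℂ))

noncomputable def qstar (n : ℕ) (Q : Polynomial ℂ) : Polynomial ℂ :=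
  ∑ j ∈ Finset.range (n+1), Polynomial.C (conj (Q.coeff (n-j))) * Polynomial.X ^ j

lemma qstar_coeff (n i : ℕ) (Q : Polynomial ℂ) (h : i ≤ n) :
    (qstar n Q).coeff i = conj (Q.coeff (n-i)) := by
  rw [qstar, Polynomial.finset_sum_coeff]
  rw [Finset.sum_eq_single i]
  · simp
  · intro j hj hne
    simp [Polynomial.coeff_C_mul, Polynomial.coeff_X_pow, hne, Ne.symm hne]
  · intro hi
    exact absurd (Finset.mem_range.mpr (Nat.lt_succ_of_le h)) hi

lemma qstar_natDegree_le (n : ℕ) (Q : Polynomial ℂ) : (qstar n Q).natDegree ≤ n := by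
  apply Polynomial.natDegree_sum_le_of_forall_le
  intro j hj
  apply le_trans (Polynomial.natDegree_C_mul_le _ _)
  simpa using Nat.lt_succ_iff.mp (Finset.mem_range.mp hj)

lemma qstar_eval (n : ℕ) (Q : Polynomial ℂ) (hQ : Q.natDegree ≤ n) (z : ℂ) (hz : z ≠ 0) :
    (qstar n Q).eval z = z ^ n * conj (Q.eval ((conj z)⁻¹)) := by
  rw [qstar]
  rw [Polynomial.eval_finset_sum]
  simp only [Polynomial.eval_mul, Polynomial.eval_C, Polynomial.eval_pow, Polynomial.eval_X]
  rw [Polynomial.eval_eq_sum_range' (Nat.lt_succ_of_le hQ), map_sum]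
  rw [Finset.mul_sum]
  rw [← Finset.sum_range_reflect]
  apply Finset.sum_congr rfl
  intro j hj
  have hj' : j ≤ n := Nat.lt_succ_iff.mp (Finset.mem_range.mp hj)
  simp only [Nat.add_sub_cancel]
  rw [Nat.sub_sub_self hj']
  rw [map_mul, map_pow, map_inv₀, Complex.conj_conj]
  have : z ^ n = z ^ j * z ^ (n - j) := by rw [← pow_add]; congr 1; omega
  rw [this]
  field_simp
  rw [mul_assoc, ← mul_pow, mul_one_div_cancel hz, one_pow, mul_one]

lemma qstar_zero (n : ℕ) : qstar n 0 = 0 := by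
  simp [qstar]

lemma qstar_shift (n : ℕ) (Q : Polynomial ℂ) (hQ : Q.natDegree ≤ n) :
    qstar (n+1) Q = Polynomial.X * qstar n Q := by
  by_cases h0 : Q = 0
  · simp [h0, qstar_zero]
  apply sub_eq_zero.mp
  apply poly_eq_of_nonzero
  intro z hz
  simp only [Polynomial.eval_sub, Polynomial.eval_mul, Polynomial.eval_X]
  rw [qstar_eval (n+1) Q (le_trans hQ (Nat.le_succ n)) z hz,
      qstar_eval n Q hQ z hz]
  ring

lemma qstar_linear_mul (n : ℕ) (Q : Polynomial ℂ) (w : ℂ) (hw : w ≠ 0)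
    (hQ : Q.natDegree ≤ n) :
    qstar (n+1) ((Polynomial.X - Polynomial.C w) * Q) =
      Polynomial.C (-(conj w)) * (Polynomial.X - Polynomial.C (conj w)⁻¹) * qstar n Q := by
  have hd : ((Polynomial.X - Polynomial.C w) * Q).natDegree ≤ n + 1 := by
    apply le_trans (Polynomial.natDegree_mul_le)
    have : (Polynomial.X - Polynomial.C w).natDegree = 1 := Polynomial.natDegree_X_sub_C w
    omega
  apply sub_eq_zero.mp
  apply poly_eq_of_nonzero
  intro z hz
  have hwc : conj w ≠ 0 := by simpa using hw
  simp only [Polynomial.eval_sub, Polynomial.eval_mul, Polynomial.eval_X, Polynomial.eval_C]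
  rw [qstar_eval (n+1) _ hd z hz, qstar_eval n Q hQ z hz]
  simp only [Polynomial.eval_mul, Polynomial.eval_sub, Polynomial.eval_X, Polynomial.eval_C,
    map_mul, map_sub, map_inv₀, Complex.conj_conj]
  field_simp
  ring

lemma circle_root_deriv (R : ℕ) (A : Polynomial ℂ) (c : ℂ) (hc : c ≠ 0)
    (hpos : ∀ z : ℂ, ‖z‖ = 1 → ∃ t : ℝ, 0 ≤ t ∧ A.eval z = c * t * z ^ R)
    (w : ℂ) (hw : ‖w‖ = 1) (hr : A.eval w = 0) : A.derivative.eval w = 0 := by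
  have hw0 : w ≠ 0 := by intro h; rw [h] at hw; simp at hw
  set dE : ℂ := A.derivative.eval w * (w * I) * (c * w ^ R)⁻¹ with hdE
  set E : ℂ → ℂ := fun u => A.eval (w * Complex.exp (u * I)) *
      Complex.exp (u * (-(R:ℂ) * I)) * (c * w ^ R)⁻¹ with hEdef
  have h1 : HasDerivAt (fun u : ℂ => w * Complex.exp (u * I)) (w * I) 0 := by
    have := ((Complex.hasDerivAt_exp ((0:ℂ) * I)).comp 0
      ((hasDerivAt_id (0:ℂ)).mul_const I)).const_mul w
    simpa using this
  have h2 : HasDerivAt (fun u : ℂ => A.eval (w * Complex.exp (u * I)))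
      (A.derivative.eval w * (w * I)) 0 := by
    have := (Polynomial.hasDerivAt A (w * Complex.exp ((0:ℂ) * I))).comp 0 h1
    simpa [Function.comp_def] using this
  have h3 : HasDerivAt (fun u : ℂ => Complex.exp (u * (-(R:ℂ) * I))) (-(R:ℂ) * I) 0 := by
    have := (Complex.hasDerivAt_exp ((0:ℂ) * (-(R:ℂ) * I))).comp 0
      ((hasDerivAt_id (0:ℂ)).mul_const (-(R:ℂ) * I))
    simpa [Function.comp_def] using this
  have hE : HasDerivAt E dE 0 := by
    have := (h2.mul h3).mul_const (c * w ^ R)⁻¹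
    simpa [hEdef, hdE, hr] using this
  have hv : HasDerivAt (fun θ : ℝ => E θ) dE 0 := hE.comp_ofReal
  -- realness
  have hreal : ∀ θ : ℝ, ∃ t : ℝ, 0 ≤ t ∧ E θ = t := by
    intro θ
    have hnorm : ‖w * Complex.exp ((θ:ℂ) * I)‖ = 1 := by
      rw [norm_mul, hw, Complex.norm_exp_ofReal_mul_I, one_mul]
    obtain ⟨t, ht0, ht⟩ := hpos _ hnorm
    refine ⟨t, ht0, ?_⟩
    rw [hEdef]
    simp only
    rw [ht, mul_pow, ← Complex.exp_nat_mul]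
    have key : Complex.exp ((R:ℂ) * ((θ:ℂ) * I)) * Complex.exp ((θ:ℂ) * (-(R:ℂ) * I)) = 1 := by
      rw [← Complex.exp_add, show (R:ℂ) * ((θ:ℂ) * I) + (θ:ℂ) * (-(R:ℂ) * I) = 0 by ring,
        Complex.exp_zero]
    have hcw : c * w ^ R ≠ 0 := mul_ne_zero hc (pow_ne_zero _ hw0)
    have hinv : (c * w ^ R) * (c * w ^ R)⁻¹ = 1 := mul_inv_cancel₀ hcw
    linear_combination (c * (t:ℂ) * w ^ R * (c * w ^ R)⁻¹) * key + (t:ℂ) * hinv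
  have hE0 : E 0 = 0 := by simp [hEdef, hr]
  -- real part has local min at 0
  have hre : HasDerivAt (fun θ : ℝ => (E θ).re) dE.re 0 :=
    Complex.reCLM.hasFDerivAt.comp_hasDerivAt 0 hv
  have him : HasDerivAt (fun θ : ℝ => (E θ).im) dE.im 0 :=
    Complex.imCLM.hasFDerivAt.comp_hasDerivAt 0 hv
  have hmin : IsLocalMin (fun θ : ℝ => (E θ).re) 0 := by
    apply Filter.Eventually.of_forall
    intro θ
    obtain ⟨t, ht0, ht⟩ := hreal θ
    simp [hE0, ht, ht0]
  have hre0 : dE.re = 0 := hmin.hasDerivAt_eq_zero hre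
  have him0 : dE.im = 0 := by
    have hconst : (fun θ : ℝ => (E θ).im) = fun _ => 0 := by
      funext θ
      obtain ⟨t, ht0, ht⟩ := hreal θ
      simp [ht]
    rw [hconst] at him
    exact (him.unique (hasDerivAt_const 0 0))
  have hdE0 : dE = 0 := Complex.ext hre0 him0
  rw [hdE] at hdE0
  have hcw : (c * w ^ R)⁻¹ ≠ 0 := inv_ne_zero (mul_ne_zero hc (pow_ne_zero _ hw0))
  have := mul_eq_zero.mp hdE0
  rcases this with h | h
  · rcases mul_eq_zero.mp h with h' | h'
    · exact h'
    · exact absurd h' (mul_ne_zero hw0 I_ne_zero)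
  · exact absurd h hcw

-- conj z inverse on circle
lemma conj_inv_circle {z : ℂ} (hz : ‖z‖ = 1) : (conj z)⁻¹ = z := by
  have h : z * conj z = 1 := by
    rw [Complex.mul_conj, Complex.normSq_eq_norm_sq, hz]
    norm_num
  exact inv_eq_of_mul_eq_one_left h

lemma circle_ne_zero {z : ℂ} (hz : ‖z‖ = 1) : z ≠ 0 := by
  intro h; rw [h] at hz; simp at hz

-- self-inversive identity
lemma self_inversive (R : ℕ) (A : Polynomial ℂ) (c : ℂ) (hc : c ≠ 0)
    (hdeg : A.natDegree ≤ 2*R)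
    (hpos : ∀ z : ℂ, ‖z‖ = 1 → ∃ t : ℝ, 0 ≤ t ∧ A.eval z = c * t * z ^ R) :
    qstar (2*R) A = Polynomial.C (conj c / c) * A := by
  apply sub_eq_zero.mp
  apply poly_eq_of_circle
  intro z hz
  have hz0 : z ≠ 0 := circle_ne_zero hz
  obtain ⟨t, ht0, ht⟩ := hpos z hz
  have hci : (conj z)⁻¹ = z := conj_inv_circle hz
  have hcz : conj z = z⁻¹ := by
    rw [← inv_inv (conj z), hci]
  simp only [Polynomial.eval_sub, Polynomial.eval_mul, Polynomial.eval_C]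
  rw [qstar_eval (2*R) A hdeg z hz0, hci, ht]
  rw [map_mul, map_mul, map_pow, hcz]
  have hz1 : z * z⁻¹ = 1 := mul_inv_cancel₀ hz0
  have h2R : z ^ (2*R) = z ^ R * z ^ R := by rw [← pow_add]; congr 1; omega
  rw [h2R]
  have hcc : c * c⁻¹ = 1 := mul_inv_cancel₀ hc
  rw [div_eq_mul_inv]
  rw [Complex.conj_ofReal]
  have hzR : z ^ R * (z⁻¹) ^ R = 1 := by
    rw [← mul_pow, hz1, one_pow]
  linear_combination (z ^ R * conj c * (t:ℂ)) * hzR - (z ^ R * conj c * (t:ℂ)) * hcc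

lemma exp_ne_one (n : ℕ) : Complex.exp ((((n:ℝ)+1)⁻¹ : ℝ) * I) ≠ 1 := by
  intro h
  rw [Complex.exp_eq_one_iff] at h
  obtain ⟨m, hm⟩ := h
  have key : ((((n:ℝ)+1)⁻¹ - m * (2*Real.pi) : ℝ) : ℂ) * I = 0 := by
    push_cast at hm ⊢
    linear_combination hm
  rcases mul_eq_zero.mp key with h0 | h0
  swap
  · exact absurd h0 I_ne_zero
  rw [Complex.ofReal_eq_zero] at h0
  have ha : (0:ℝ) < ((n:ℝ)+1)⁻¹ := by positivity
  have ha1 : ((n:ℝ)+1)⁻¹ ≤ 1 := by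
    rw [inv_le_one_iff₀]; right; linarith [Nat.cast_nonneg (α := ℝ) n]
  have hpi := Real.pi_gt_three
  rcases lt_trichotomy m 0 with h'|h'|h'
  · have : (m:ℝ) ≤ -1 := by exact_mod_cast Int.le_sub_one_iff.mpr h'
    nlinarith
  · rw [h'] at h0; push_cast at h0; linarith
  · have : (1:ℝ) ≤ m := by exact_mod_cast h'
    nlinarith

lemma pos_quotient (r : ℕ) (B : Polynomial ℂ) (c' w : ℂ) (hc' : c' ≠ 0) (hw : ‖w‖ = 1)
    (hstep : ∀ z : ℂ, ‖z‖ = 1 → z ≠ w → ∃ t : ℝ, 0 ≤ t ∧ B.eval z = c' * t * z ^ r) :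
    ∀ z : ℂ, ‖z‖ = 1 → ∃ t : ℝ, 0 ≤ t ∧ B.eval z = c' * t * z ^ r := by
  intro z hz
  by_cases hzw : z = w
  swap
  · exact hstep z hz hzw
  subst hzw
  -- limit argument
  have hz0 : z ≠ 0 := circle_ne_zero hz
  have hne : c' * z ^ r ≠ 0 := mul_ne_zero hc' (pow_ne_zero _ hz0)
  set f : ℂ → ℂ := fun u => B.eval u * (c' * u ^ r)⁻¹ with hfdef
  set S : Set ℂ := {x : ℂ | 0 ≤ x.re ∧ x.im = 0} with hSdef
  have hS : IsClosed S := by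
    have : S = Complex.re ⁻¹' (Set.Ici 0) ∩ Complex.im ⁻¹' {0} := by
      ext x; simp [hSdef, Set.mem_Ici]
    rw [this]
    exact (isClosed_Ici.preimage Complex.continuous_re).inter
      (isClosed_singleton.preimage Complex.continuous_im)
  set zn : ℕ → ℂ := fun n => z * Complex.exp ((((n:ℝ)+1)⁻¹ : ℝ) * I) with hzndef
  have hzn_circ : ∀ n, ‖zn n‖ = 1 := by
    intro n
    rw [hzndef]
    simp only
    rw [norm_mul, hz, one_mul]
    exact circ_mem n
  have hzn_ne : ∀ n, zn n ≠ z := by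
    intro n h
    rw [hzndef] at h
    simp only at h
    exact exp_ne_one n (mul_left_cancel₀ hz0 (h.trans (mul_one z).symm))
  have hmem : ∀ n, f (zn n) ∈ S := by
    intro n
    obtain ⟨t, ht0, ht⟩ := hstep (zn n) (hzn_circ n) (hzn_ne n)
    have hzn0 : zn n ≠ 0 := circle_ne_zero (hzn_circ n)
    have hne' : c' * (zn n) ^ r ≠ 0 := mul_ne_zero hc' (pow_ne_zero _ hzn0)
    have : f (zn n) = (t : ℂ) := by
      rw [hfdef]; simp only; rw [ht]
      field_simp
    rw [this]
    constructor <;> simp [ht0]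
  have htend : Filter.Tendsto zn Filter.atTop (nhds z) := by
    have hx : Filter.Tendsto (fun n : ℕ => (((n:ℝ)+1)⁻¹)) Filter.atTop (nhds 0) := by
      simpa [one_div] using tendsto_one_div_add_atTop_nhds_zero_nat (𝕜 := ℝ)
    have hcont : Continuous (fun x : ℝ => z * Complex.exp ((x:ℂ) * I)) := by continuity
    have := (hcont.tendsto 0).comp hx
    simpa [hzndef, Function.comp_def] using this
  have hfc : ContinuousAt f z := by
    apply ContinuousAt.mul
    · exact (Polynomial.continuous B).continuousAt
    · exact ((continuous_const.mul (continuous_pow r)).continuousAt).inv₀ hne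
  have hfw : f z ∈ S := hS.mem_of_tendsto (hfc.tendsto.comp htend)
    (Filter.Eventually.of_forall hmem)
  refine ⟨(f z).re, hfw.1, ?_⟩
  have hfz : f z = ((f z).re : ℂ) := by
    apply Complex.ext <;> simp [hfw.2]
  have : B.eval z = f z * (c' * z ^ r) := by
    rw [hfdef]; simp only
    field_simp
  rw [this]
  nth_rewrite 1 [hfz]
  ring

lemma fr_key : ∀ (r : ℕ) (A : Polynomial ℂ) (c : ℂ), c ≠ 0 → A.natDegree ≤ 2*r →
    (∀ z : ℂ, ‖z‖ = 1 → ∃ t : ℝ, 0 ≤ t ∧ A.eval z = c * t * z ^ r) →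
    ∃ Q : Polynomial ℂ, Q.natDegree ≤ r ∧ A = Polynomial.C c * Q * qstar r Q := by
  intro r
  induction r with
  | zero =>
    intro A c hc hdeg hpos
    have hA : A = Polynomial.C (A.coeff 0) := Polynomial.eq_C_of_natDegree_le_zero (by omega)
    obtain ⟨t, ht0, ht⟩ := hpos 1 (by norm_num)
    have hev : A.eval 1 = A.coeff 0 := by rw [hA]; simp
    refine ⟨Polynomial.C ((Real.sqrt t : ℝ) : ℂ), by simp, ?_⟩
    have hq : qstar 0 (Polynomial.C ((Real.sqrt t : ℝ) : ℂ)) =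
        Polynomial.C ((Real.sqrt t : ℝ) : ℂ) := by
      simp [qstar, Complex.conj_ofReal]
    rw [hq, hA]
    rw [← map_mul, ← map_mul]
    congr 1
    rw [← hev, ht]
    have hs : ((Real.sqrt t : ℝ) : ℂ) * ((Real.sqrt t : ℝ) : ℂ) = ((t:ℝ):ℂ) := by
      rw [← Complex.ofReal_mul, Real.mul_self_sqrt ht0]
    linear_combination (-c) * hs
  | succ r IH =>
    intro A c hc hdeg hpos
    by_cases hA0 : A = 0
    · exact ⟨0, by simp, by simp [hA0, qstar_zero]⟩
    have hsym := self_inversive (r+1) A c hc hdeg hpos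
    by_cases h00 : A.coeff 0 = 0
    · -- divide by X
      have htop : A.coeff (2*(r+1)) = 0 := by
        have h1 := congrArg (fun P => Polynomial.coeff P (2*(r+1))) hsym
        rw [qstar_coeff _ _ _ (le_refl _), Nat.sub_self, h00] at h1
        simp only [Polynomial.coeff_C_mul] at h1
        have : conj c / c ≠ 0 := div_ne_zero (by simpa using hc) hc
        rw [map_zero] at h1
        rcases mul_eq_zero.mp h1.symm with h | h
        · exact absurd h this
        · exact h
      have hdeg' : A.natDegree ≤ 2*(r+1) - 1 := by
        by_contra hcon
        have heq : A.natDegree = 2*(r+1) := by omega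
        have := Polynomial.leadingCoeff_ne_zero.mpr hA0
        rw [Polynomial.leadingCoeff, heq] at this
        exact this htop
      set B := A.divX with hBdef
      have hXB : A = Polynomial.X * B := by
        have := A.X_mul_divX_add
        rw [h00] at this
        simpa using this.symm
      have hB0 : B ≠ 0 := by
        intro h; rw [h, mul_zero] at hXB; exact hA0 hXB
      have hBdeg : B.natDegree ≤ 2*r := by
        have := Polynomial.natDegree_mul (Polynomial.X_ne_zero (R := ℂ)) hB0
        rw [← hXB, Polynomial.natDegree_X] at this
        omega
      have hBpos : ∀ z : ℂ, ‖z‖ = 1 → ∃ t : ℝ, 0 ≤ t ∧ B.eval z = c * t * z ^ r := by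
        intro z hz
        have hz0 : z ≠ 0 := circle_ne_zero hz
        obtain ⟨t, ht0, ht⟩ := hpos z hz
        refine ⟨t, ht0, ?_⟩
        rw [hXB] at ht
        simp only [Polynomial.eval_mul, Polynomial.eval_X] at ht
        have : z * B.eval z = z * (c * t * z ^ r) := by
          rw [ht]; ring
        exact mul_left_cancel₀ hz0 this
      obtain ⟨Q, hQdeg, hQ⟩ := IH B c hc hBdeg hBpos
      refine ⟨Q, le_trans hQdeg (Nat.le_succ r), ?_⟩
      rw [qstar_shift r Q hQdeg, hXB, hQ]
      ring
    · -- coeff 0 ≠ 0 : find root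
      have hdegpos : 0 < A.degree := by
        by_contra hcon
        push_neg at hcon
        have hA : A = Polynomial.C (A.coeff 0) :=
          Polynomial.eq_C_of_natDegree_le_zero (Polynomial.natDegree_le_iff_degree_le.mpr
            (le_trans hcon (by norm_num)))
        obtain ⟨t1, ht10, ht1⟩ := hpos 1 (by norm_num)
        set z0 : ℂ := Complex.exp ((Real.pi/(r+1) : ℝ) * I) with hz0def
        have hz0c : ‖z0‖ = 1 := by
          rw [hz0def]
          simpa using Complex.norm_exp_ofReal_mul_I (Real.pi/(r+1))
        have hz0pow : z0 ^ (r+1) = -1 := by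
          rw [hz0def, ← Complex.exp_nat_mul]
          have hne : ((r:ℂ) + 1) ≠ 0 := by
            have : ((r+1:ℕ):ℂ) ≠ 0 := Nat.cast_ne_zero.mpr (Nat.succ_ne_zero r)
            push_cast at this
            exact this
          rw [show ((r+1:ℕ):ℂ) * (((Real.pi/(r+1) : ℝ) : ℂ) * I) = (Real.pi : ℂ) * I by
            push_cast
            field_simp]
          exact Complex.exp_pi_mul_I
        obtain ⟨t2, ht20, ht2⟩ := hpos z0 hz0c
        rw [hA] at ht1 ht2
        simp at ht1 ht2
        rw [hz0pow] at ht2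
        have hsum : c * ((t1 : ℂ) + t2) = 0 := by
          linear_combination ht2 - ht1
        have : (t1 : ℂ) + t2 = 0 := by
          rcases mul_eq_zero.mp hsum with h | h
          · exact absurd h hc
          · exact h
        have : t1 + t2 = 0 := by exact_mod_cast this
        have ht1z : t1 = 0 := by linarith
        rw [ht1z] at ht1
        simp at ht1
        exact h00 ht1
      obtain ⟨w, hwroot⟩ := Complex.exists_root hdegpos
      have hw0 : w ≠ 0 := by
        intro h
        rw [h] at hwroot
        exact h00 ((Polynomial.coeff_zero_eq_eval_zero A).trans hwroot)
      set w' : ℂ := (conj w)⁻¹ with hw'def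
      have hwc : conj w ≠ 0 := by simpa using hw0
      have hw'0 : w' ≠ 0 := inv_ne_zero hwc
      have hfact : ∃ B : Polynomial ℂ,
          A = (Polynomial.X - Polynomial.C w) * ((Polynomial.X - Polynomial.C w') * B) := by
        by_cases hcirc : ‖w‖ = 1
        · have hww' : w' = w := conj_inv_circle hcirc
          have hder := circle_root_deriv (r+1) A c hc hpos w hcirc hwroot
          obtain ⟨G, hG⟩ := Polynomial.dvd_iff_isRoot.mpr hwroot
          have hGw : G.eval w = 0 := by
            have hd := congrArg (fun P => Polynomial.eval w (Polynomial.derivative P)) hG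
            simp only [Polynomial.derivative_mul, Polynomial.derivative_X_sub_C,
              Polynomial.eval_add, Polynomial.eval_mul, Polynomial.eval_one,
              Polynomial.eval_sub, Polynomial.eval_X, Polynomial.eval_C, sub_self,
              zero_mul, one_mul] at hd
            rw [hder] at hd
            simpa using hd.symm
          obtain ⟨B, hB⟩ := Polynomial.dvd_iff_isRoot.mpr hGw
          exact ⟨B, by rw [hww', hG, hB]⟩
        · -- w off circle, reflected root
          have h1 := congrArg (Polynomial.eval w') hsym
          have hcw' : (conj w')⁻¹ = w := by
            rw [hw'def, map_inv₀, Complex.conj_conj, inv_inv]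
          rw [qstar_eval (2*(r+1)) A hdeg w' hw'0, hcw', hwroot] at h1
          simp only [map_zero, mul_zero, Polynomial.eval_mul, Polynomial.eval_C] at h1
          have hcdiv : conj c / c ≠ 0 := div_ne_zero (by simpa using hc) hc
          have hw'root : A.eval w' = 0 := by
            rcases mul_eq_zero.mp h1.symm with h | h
            · exact absurd h hcdiv
            · exact h
          have hne : w' ≠ w := by
            intro h
            apply hcirc
            have : w * conj w = 1 := by
              rw [hw'def] at h
              have hwc1 := mul_inv_cancel₀ hwc
              linear_combination (-(conj w)) * h + hwc1
            rw [Complex.mul_conj] at this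
            have : Complex.normSq w = 1 := by exact_mod_cast this
            rw [Complex.norm_def, this, Real.sqrt_one]
          obtain ⟨G, hG⟩ := Polynomial.dvd_iff_isRoot.mpr hwroot
          have hGw' : G.eval w' = 0 := by
            rw [hG] at hw'root
            simp only [Polynomial.eval_mul, Polynomial.eval_sub, Polynomial.eval_X,
              Polynomial.eval_C] at hw'root
            rcases mul_eq_zero.mp hw'root with h | h
            · exact absurd (by linear_combination h : w' = w) hne
            · exact h
          obtain ⟨B, hB⟩ := Polynomial.dvd_iff_isRoot.mpr hGw'
          exact ⟨B, by rw [hG, hB]⟩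
      obtain ⟨B, hABfact⟩ := hfact
      have hB0 : B ≠ 0 := by
        intro h
        rw [h, mul_zero, mul_zero] at hABfact
        exact hA0 hABfact
      have hXw : (Polynomial.X - Polynomial.C w) ≠ (0 : Polynomial ℂ) :=
        Polynomial.X_sub_C_ne_zero w
      have hXw' : (Polynomial.X - Polynomial.C w') ≠ (0 : Polynomial ℂ) :=
        Polynomial.X_sub_C_ne_zero w'
      have hBdeg : B.natDegree ≤ 2*r := by
        have h1 : ((Polynomial.X - Polynomial.C w') * B).natDegree = 1 + B.natDegree := by
          rw [Polynomial.natDegree_mul hXw' hB0, Polynomial.natDegree_X_sub_C]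
        have h2 : A.natDegree = 1 + (1 + B.natDegree) := by
          rw [hABfact, Polynomial.natDegree_mul hXw (mul_ne_zero hXw' hB0), h1,
            Polynomial.natDegree_X_sub_C]
        omega
      set c' : ℂ := -(conj w) * c with hc'def
      have hc' : c' ≠ 0 := mul_ne_zero (by simpa using hwc) hc
      have hstep : ∀ z : ℂ, ‖z‖ = 1 → z ≠ w →
          ∃ t : ℝ, 0 ≤ t ∧ B.eval z = c' * t * z ^ r := by
        intro z hz hzw
        have hz0 : z ≠ 0 := circle_ne_zero hz
        obtain ⟨t, ht0, ht⟩ := hpos z hz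
        have hcz : conj z = z⁻¹ := by
          rw [← inv_inv (conj z), conj_inv_circle hz]
        have hz1 : z * z⁻¹ = 1 := mul_inv_cancel₀ hz0
        have hwc1 : conj w * (conj w)⁻¹ = 1 := mul_inv_cancel₀ hwc
        have hzw' : z - w' = -(z * (conj w)⁻¹) * conj (z - w) := by
          rw [map_sub, hcz, hw'def]
          linear_combination (conj w)⁻¹ * hz1 - z * hwc1
        set N : ℝ := Complex.normSq (z - w) with hNdef
        have hzwne : z - w ≠ 0 := sub_ne_zero.mpr hzw
        have hN0 : N ≠ 0 := by
          rw [hNdef]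
          exact fun h => hzwne (Complex.normSq_eq_zero.mp h)
        have hNpos : 0 < N := lt_of_le_of_ne (Complex.normSq_nonneg _) (Ne.symm hN0)
        have hmc : (z - w) * conj (z - w) = ((N : ℝ) : ℂ) := Complex.mul_conj _
        rw [hABfact] at ht
        simp only [Polynomial.eval_mul, Polynomial.eval_sub, Polynomial.eval_X,
          Polynomial.eval_C] at ht
        rw [hzw'] at ht
        have hE2 : -(z * (conj w)⁻¹) * ((N:ℝ):ℂ) * B.eval z = c * t * z^(r+1) := by
          rw [← hmc]
          linear_combination ht
        refine ⟨t / N, div_nonneg ht0 (le_of_lt hNpos), ?_⟩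
        have hNC : ((N:ℝ):ℂ) ≠ 0 := by exact_mod_cast hN0
        rw [Complex.ofReal_div]
        field_simp
        rw [hc'def]
        have hnz : -(z * (conj w)⁻¹) ≠ 0 := by
          simp [hz0, hwc]
        apply mul_left_cancel₀ hnz
        rw [show -(z * (conj w)⁻¹) * (B.eval z * ((N:ℝ):ℂ)) =
          -(z * (conj w)⁻¹) * ((N:ℝ):ℂ) * B.eval z from by ring, hE2]
        linear_combination (-(c * (t:ℂ) * z^(r+1))) * hwc1
      have hBpos : ∀ z : ℂ, ‖z‖ = 1 → ∃ t : ℝ, 0 ≤ t ∧ B.eval z = c' * t * z ^ r := by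
        by_cases hcirc : ‖w‖ = 1
        · exact pos_quotient r B c' w hc' hcirc hstep
        · intro z hz
          refine hstep z hz ?_
          intro h
          rw [h] at hz
          exact hcirc hz
      obtain ⟨Q, hQd, hQeq⟩ := IH B c' hc' hBdeg hBpos
      refine ⟨(Polynomial.X - Polynomial.C w) * Q, ?_, ?_⟩
      · apply le_trans (Polynomial.natDegree_mul_le)
        rw [Polynomial.natDegree_X_sub_C]
        omega
      · rw [qstar_linear_mul r Q w hw0 hQd, hABfact, hQeq, hc'def]
        rw [show Polynomial.C (-(conj w) * c) =
          Polynomial.C (-(conj w)) * Polynomial.C c from by rw [← map_mul]]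
        ring

lemma eval_assoc_poly (r : ℕ) (p : ℤ → ℝ) (z : ℂ) (hz : z ≠ 0) :
    (∑ j ∈ Finset.range (2*r+1),
        Polynomial.C ((p ((r:ℤ) - j) : ℂ)) * Polynomial.X ^ j).eval z =
      z ^ r * ∑ k ∈ Finset.Icc (-(r:ℤ)) (r:ℤ), (p k : ℂ) * z ^ (-k) := by
  rw [Polynomial.eval_finset_sum]
  simp only [Polynomial.eval_mul, Polynomial.eval_C, Polynomial.eval_pow, Polynomial.eval_X]
  rw [Finset.mul_sum]
  have hstep : ∀ k ∈ Finset.Icc (-(r:ℤ)) (r:ℤ),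
      z ^ r * ((p k : ℂ) * z ^ (-k)) = (p k : ℂ) * z ^ ((r:ℤ) - k) := by
    intro k hk
    rw [show z ^ r = z ^ ((r:ℤ)) from (zpow_natCast z r).symm, sub_eq_add_neg,
      zpow_add₀ hz]
    ring
  rw [Finset.sum_congr rfl hstep]
  symm
  apply Finset.sum_nbij' (i := fun (k:ℤ) => ((r:ℤ) - k).toNat) (j := fun (n:ℕ) => (r:ℤ) - n)
  · intro k hk
    rw [Finset.mem_Icc] at hk
    rw [Finset.mem_range]
    omega
  · intro n hn
    rw [Finset.mem_range] at hn
    rw [Finset.mem_Icc]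
    omega
  · intro k hk
    rw [Finset.mem_Icc] at hk
    omega
  · intro n hn
    rw [Finset.mem_range] at hn
    omega
  · intro k hk
    rw [Finset.mem_Icc] at hk
    have hcast : ((((r:ℤ) - k).toNat : ℤ)) = (r:ℤ) - k := Int.toNat_of_nonneg (by omega)
    rw [show ((r:ℤ) - (((r:ℤ) - k).toNat : ℤ)) = k by omega]
    congr 1
    conv_lhs => rw [← hcast, zpow_natCast]

theorem fejer_riesz_aux (r : ℕ) (p : ℤ → ℝ)
    (hpos : ∀ z : ℂ, ‖z‖ = 1 → ∃ t : ℝ, 0 ≤ t ∧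
      ∑ k ∈ Finset.Icc (-(r : ℤ)) (r : ℤ), (p k : ℂ) * z ^ (-k) = (t : ℂ)) :
    ∃ q : ℕ → ℂ, ∀ z : ℂ, ‖z‖ = 1 →
      ∑ k ∈ Finset.Icc (-(r : ℤ)) (r : ℤ), (p k : ℂ) * z ^ (-k) =
        (∑ k ∈ Finset.range (r + 1), q k * z ^ (-(k : ℤ))) *
          (starRingEnd ℂ) (∑ k ∈ Finset.range (r + 1), q k * z ^ (-(k : ℤ))) := by
  set A : Polynomial ℂ := ∑ j ∈ Finset.range (2*r+1),
      Polynomial.C ((p ((r:ℤ) - j) : ℂ)) * Polynomial.X ^ j with hAdef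
  have hAdeg : A.natDegree ≤ 2*r := by
    apply Polynomial.natDegree_sum_le_of_forall_le
    intro j hj
    apply le_trans (Polynomial.natDegree_C_mul_le _ _)
    simpa using Nat.lt_succ_iff.mp (Finset.mem_range.mp hj)
  have hApos : ∀ z : ℂ, ‖z‖ = 1 → ∃ t : ℝ, 0 ≤ t ∧ A.eval z = 1 * t * z ^ r := by
    intro z hz
    obtain ⟨t, ht0, ht⟩ := hpos z hz
    refine ⟨t, ht0, ?_⟩
    rw [hAdef, eval_assoc_poly r p z (circle_ne_zero hz), ht]
    ring
  obtain ⟨Q, hQd, hQeq⟩ := fr_key r A 1 one_ne_zero hAdeg hApos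
  refine ⟨fun k => Q.coeff (r - k), ?_⟩
  intro z hz
  have hz0 : z ≠ 0 := circle_ne_zero hz
  have hcz : conj z = z⁻¹ := by
    rw [← inv_inv (conj z), conj_inv_circle hz]
  have hSum : ∑ k ∈ Finset.range (r+1), Q.coeff (r - k) * z ^ (-(k:ℤ)) =
      (z ^ r)⁻¹ * Q.eval z := by
    have h1 : ∀ k ∈ Finset.range (r+1), Q.coeff (r - k) * z ^ (-(k:ℤ)) =
        Q.coeff (r - k) * z ^ ((((r - k : ℕ)):ℤ) - r) := by
      intro k hk
      rw [Finset.mem_range] at hk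
      congr 1
      rw [show (((r - k : ℕ)):ℤ) - r = -(k:ℤ) by omega]
    rw [Finset.sum_congr rfl h1]
    have h2 := Finset.sum_range_reflect (fun m => Q.coeff m * z ^ ((m:ℤ) - r)) (r+1)
    simp only [Nat.add_sub_cancel] at h2
    rw [h2]
    rw [Polynomial.eval_eq_sum_range' (Nat.lt_succ_of_le hQd), Finset.mul_sum]
    apply Finset.sum_congr rfl
    intro m hm
    rw [sub_eq_add_neg, zpow_add₀ hz0, zpow_natCast, zpow_neg, zpow_natCast]
    ring
  have hConj : conj (∑ k ∈ Finset.range (r+1), Q.coeff (r - k) * z ^ (-(k:ℤ))) =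
      (qstar r Q).eval z := by
    rw [map_sum, qstar, Polynomial.eval_finset_sum]
    apply Finset.sum_congr rfl
    intro k hk
    simp only [Polynomial.eval_mul, Polynomial.eval_C, Polynomial.eval_pow, Polynomial.eval_X]
    rw [map_mul, map_zpow₀, hcz]
    congr 1
    rw [zpow_neg, inv_zpow, inv_inv, zpow_natCast]
  calc ∑ k ∈ Finset.Icc (-(r : ℤ)) (r : ℤ), (p k : ℂ) * z ^ (-k)
      = (z ^ r)⁻¹ * A.eval z := by
        rw [hAdef, eval_assoc_poly r p z hz0]
        field_simp
    _ = (z ^ r)⁻¹ * (Q.eval z * (qstar r Q).eval z) := by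
        rw [hQeq]; simp
    _ = _ := by
        rw [hConj, hSum]
        ring

end FejerRieszAux

/-- Fejér–Riesz: if `P(z) = Σ_{k=−r}^{r} p(k) z^{−k}` has real
coefficients and `P(z) ≥ 0` (in particular is real) for all `z` on the unit
circle, then there is a polynomial `Q(z) = Σ_{k=0}^{r} q(k) z^{−k}` such that
`P(z) = |Q(z)|² = Q(z) conj(Q(z))` on the circle. -/
theorem fejer_riesz (r : ℕ) (p : ℤ → ℝ)
    (hpos : ∀ z : ℂ, ‖z‖ = 1 → ∃ t : ℝ, 0 ≤ t ∧
      ∑ k ∈ Finset.Icc (-(r : ℤ)) (r : ℤ), (p k : ℂ) * z ^ (-k) = (t : ℂ)) :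
    ∃ q : ℕ → ℂ, ∀ z : ℂ, ‖z‖ = 1 →
      ∑ k ∈ Finset.Icc (-(r : ℤ)) (r : ℤ), (p k : ℂ) * z ^ (-k) =
        (∑ k ∈ Finset.range (r + 1), q k * z ^ (-(k : ℤ))) *
          (starRingEnd ℂ) (∑ k ∈ Finset.range (r + 1), q k * z ^ (-(k : ℤ))) := by
  exact FejerRieszAux.fejer_riesz_aux r p hpos
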